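/- Fix ρ_p > 0, h > 0, and a point X_T ∈ ℝ². For each integer n ≥ 2 let R_n = √(n/(π ρ_p)), let X_1, …, X_n be i.i.d. random points uniformly distributed on the closed disk of radius R_n centered at the origin in ℝ², and let M_1, …, M_n be i.i.d. random variables uniformly distributed on [0,1], independent of the positions. Define P_1 = 1 if and only if |X_1 − X_T| ≥ h and M_1 < M_j for every j ≠ 1 with |X_1 − X_j| < h, and P_1 = 0 otherwise. Then lim_{n→∞} Pr(P_1 = 1) = (1 − exp(−π ρ_p h²)) / (π ρ_p h²). -/

import Mathlib

open MeasureTheory ProbabilityTheory Set Real Filter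

/-- The uniform probability measure on the closed disk of radius `R` centered at the
origin of the plane. -/
noncomputable def unifDisk (R : ℝ) : Measure (EuclideanSpace ℝ (Fin 2)) :=
  (volume (Metric.closedBall (0 : EuclideanSpace ℝ (Fin 2)) R))⁻¹ •
    volume.restrict (Metric.closedBall (0 : EuclideanSpace ℝ (Fin 2)) R)

/-- The uniform probability measure on `[0,1]`. -/
noncomputable def unifUnit : Measure ℝ := volume.restrict (Set.Icc (0:ℝ) 1)

open Metric
open scoped ENNReal Topology
set_option maxHeartbeats 1000000

abbrev E2 : Type := EuclideanSpace ℝ (Fin 2)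

instance : IsProbabilityMeasure unifUnit :=
  ⟨by simp [unifUnit, Real.volume_Icc]⟩

lemma unifDisk_prob {R : ℝ} (hR : 0 < R) : IsProbabilityMeasure (unifDisk R) := by
  constructor
  simp only [unifDisk, Measure.smul_apply, Measure.restrict_apply MeasurableSet.univ,
    Set.univ_inter, smul_eq_mul]
  exact ENNReal.inv_mul_cancel (measure_closedBall_pos volume (0:E2) hR).ne'
    (measure_closedBall_lt_top).ne

lemma finrank_E2 : Module.finrank ℝ E2 = 2 := by
  simp [finrank_euclideanSpace]

lemma unifDisk_map_smul {R : ℝ} (hR : 0 < R) :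
    Measure.map (fun x : E2 => R • x) (unifDisk 1) = unifDisk R := by
  have hf : Measurable (fun x : E2 => R • x) := (continuous_const_smul R).measurable
  have hpre : (fun x : E2 => R • x) ⁻¹' (closedBall 0 R) = closedBall 0 1 := by
    ext x
    simp only [Set.mem_preimage, Metric.mem_closedBall, dist_zero_right, norm_smul,
      Real.norm_eq_abs, abs_of_pos hR]
    constructor
    · intro hx; nlinarith [abs_nonneg (‖x‖ - ‖x‖), norm_nonneg x]
    · intro hx; nlinarith [norm_nonneg x]
  have hmapvol : Measure.map (fun x : E2 => R • x) volume
      = ENNReal.ofReal ((R ^ 2)⁻¹) • volume := by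
    have := MeasureTheory.Measure.map_addHaar_smul (volume : Measure E2) (ne_of_gt hR)
    rw [finrank_E2] at this
    rw [this, abs_of_pos (by positivity)]
  have hres : Measure.map (fun x : E2 => R • x) (volume.restrict (closedBall 0 1))
      = (ENNReal.ofReal ((R ^ 2)⁻¹) • volume).restrict (closedBall 0 R) := by
    rw [← hpre, ← Measure.restrict_map hf measurableSet_closedBall, hmapvol]
  rw [unifDisk, Measure.map_smul, hres, unifDisk]
  rw [Measure.restrict_smul]
  rw [smul_smul]
  congr 1
  rw [Measure.addHaar_closedBall' volume (0:E2) hR.le, finrank_E2,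
    Measure.addHaar_closedBall' volume (0:E2) zero_le_one, finrank_E2]
  rw [one_pow, ENNReal.ofReal_one, one_mul,
    ENNReal.mul_inv (by left; simp; positivity) (by left; exact ENNReal.ofReal_ne_top),
    ENNReal.ofReal_inv_of_pos (by positivity)]
  exact mul_comm _ _

/-- joint law of iid variables is the product measure -/
lemma joint_law {n : ℕ} {Ω : Type*} [MeasurableSpace Ω] (P : Measure Ω)
    [IsProbabilityMeasure P] {β : Type*} [MeasurableSpace β] (f : Fin n → Ω → β)
    (hf : ∀ i, Measurable (f i))
    (hindep : iIndepFun f P)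
    (ν : Measure β) [IsProbabilityMeasure ν] (hlaw : ∀ i, P.map (f i) = ν) :
    P.map (fun ω i => f i ω) = Measure.pi (fun _ : Fin n => ν) := by
  have hjoint : Measurable (fun ω i => f i ω) := measurable_pi_lambda _ hf
  haveI : ∀ i : Fin n, SigmaFinite ((fun _ : Fin n => ν) i) := fun _ => inferInstance
  refine (Measure.pi_eq fun s hs => ?_).symm
  rw [Measure.map_apply hjoint (MeasurableSet.univ_pi hs)]
  have : (fun ω i => f i ω) ⁻¹' (Set.pi Set.univ s) = ⋂ i ∈ Finset.univ, f i ⁻¹' s i := by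
    ext ω; simp [Set.mem_pi]
  rw [this, hindep.measure_inter_preimage_eq_mul Finset.univ (fun i _ => hs i)]
  refine Finset.prod_congr rfl fun i _ => ?_
  rw [← hlaw i, Measure.map_apply (hf i) (hs i)]

lemma unifDisk_ball {R : ℝ} (hR : 0 < R) {x : E2} (hsub : ball x h' ⊆ closedBall (0:E2) R)
    (hh' : 0 ≤ h') : unifDisk R (ball x h') = ENNReal.ofReal (h' ^ 2 / R ^ 2) := by
  have hV0 : volume (ball (0:E2) 1) ≠ 0 := (measure_ball_pos volume _ one_pos).ne'
  have hVt : volume (ball (0:E2) 1) ≠ ⊤ := measure_ball_lt_top.ne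
  rw [unifDisk, Measure.smul_apply, Measure.restrict_apply measurableSet_ball,
    Set.inter_eq_left.2 hsub, smul_eq_mul,
    Measure.addHaar_closedBall volume (0:E2) hR.le, finrank_E2,
    Measure.addHaar_ball volume x hh', finrank_E2,
    ENNReal.mul_inv (by left; simp; positivity) (by right; exact hV0)]
  calc (ENNReal.ofReal (R^2))⁻¹ * (volume (ball (0:E2) 1))⁻¹ *
        (ENNReal.ofReal (h'^2) * volume (ball (0:E2) 1))
      = ENNReal.ofReal ((R^2)⁻¹) * ENNReal.ofReal (h'^2) *
        ((volume (ball (0:E2) 1))⁻¹ * volume (ball (0:E2) 1)) := by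
        rw [ENNReal.ofReal_inv_of_pos (by positivity)]; ring
    _ = ENNReal.ofReal (h' ^ 2 / R ^ 2) := by
        rw [ENNReal.inv_mul_cancel hV0 hVt, mul_one, ← ENNReal.ofReal_mul (by positivity)]
        congr 1; field_simp

lemma unifUnit_Iic {t : ℝ} (ht : t ∈ Icc (0:ℝ) 1) : unifUnit (Iic t) = ENNReal.ofReal t := by
  rw [unifUnit, Measure.restrict_apply measurableSet_Iic]
  have : Iic t ∩ Icc 0 1 = Icc 0 t := by
    ext y; simp only [Set.mem_inter_iff, Set.mem_Iic, Set.mem_Icc]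
    constructor
    · rintro ⟨a, b, c⟩; exact ⟨b, a⟩
    · rintro ⟨a, b⟩; exact ⟨b, a, b.trans ht.2⟩
  rw [this, Real.volume_Icc, sub_zero]

/-- the "survival" set of a point `z`: pairs `u` that do not eliminate `z`. -/
def Sset (h : ℝ) (z : E2 × ℝ) : Set (E2 × ℝ) := {u | dist z.1 u.1 < h → z.2 < u.2}

lemma Sset_eq (h : ℝ) (z : E2 × ℝ) : Sset h z = (ball z.1 h ×ˢ Iic z.2)ᶜ := by
  ext u
  simp only [Sset, Set.mem_setOf_eq, Set.mem_compl_iff, Set.mem_prod, mem_ball, Set.mem_Iic,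
    dist_comm u.1 z.1]
  constructor
  · intro hu ⟨h1, h2⟩; exact absurd (hu h1) (not_lt.2 h2)
  · intro hu h1; by_contra h2; exact hu ⟨h1, not_lt.1 h2⟩

lemma measurableSet_W (h : ℝ) :
    MeasurableSet {p : (E2 × ℝ) × (E2 × ℝ) | dist p.1.1 p.2.1 < h → p.1.2 < p.2.2} := by
  have : {p : (E2 × ℝ) × (E2 × ℝ) | dist p.1.1 p.2.1 < h → p.1.2 < p.2.2}
      = {p : (E2 × ℝ) × (E2 × ℝ) | dist p.1.1 p.2.1 < h}ᶜ
        ∪ {p : (E2 × ℝ) × (E2 × ℝ) | p.1.2 < p.2.2} := by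
    ext p
    simp only [Set.mem_setOf_eq, Set.mem_union, Set.mem_compl_iff]
    tauto
  rw [this]
  exact ((measurableSet_lt (measurable_fst.fst.dist measurable_snd.fst)
    measurable_const).compl).union
    (measurableSet_lt measurable_fst.snd measurable_snd.snd)

/-- the integrand appearing after conditioning on the representative pair. -/
noncomputable def Fint (h R : ℝ) (XT : E2) (k : ℕ) : E2 × ℝ → ℝ≥0∞ :=
  fun z => {p : E2 × ℝ | h ≤ dist p.1 XT}.indicator
    (fun z => (((unifDisk R).prod unifUnit) (Sset h z)) ^ k) z

lemma measurable_Fint (h R : ℝ) (hR : 0 < R) (XT : E2) (k : ℕ) :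
    Measurable (Fint h R XT k) := by
  haveI := unifDisk_prob hR
  refine Measurable.indicator ?_
    (measurableSet_le measurable_const (measurable_fst.dist measurable_const))
  have : (fun z : E2 × ℝ => ((unifDisk R).prod unifUnit) (Sset h z))
      = fun z => ((unifDisk R).prod unifUnit)
        (Prod.mk z ⁻¹' {p : (E2 × ℝ) × (E2 × ℝ) | dist p.1.1 p.2.1 < h → p.1.2 < p.2.2}) := by
    rfl
  exact ((this ▸ measurable_measure_prodMk_left (measurableSet_W h)).pow_const k)

lemma Fint_le_one (h R : ℝ) (hR : 0 < R) (XT : E2) (k : ℕ) (z : E2 × ℝ) :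
    Fint h R XT k z ≤ 1 := by
  haveI := unifDisk_prob hR
  haveI : IsProbabilityMeasure ((unifDisk R).prod unifUnit) := by infer_instance
  unfold Fint
  by_cases hz : z ∈ {p : E2 × ℝ | h ≤ dist p.1 XT}
  · rw [Set.indicator_of_mem hz]
    exact pow_le_one' prob_le_one k
  · rw [Set.indicator_of_notMem hz]; exact zero_le_one

lemma chain (h R : ℝ) (hR : 0 < R) (XT : E2) (n : ℕ)
    {Ω : Type} [MeasurableSpace Ω] (P : Measure Ω) [IsProbabilityMeasure P]
    (X : Fin (n+2) → Ω → E2) (M : Fin (n+2) → Ω → ℝ)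
    (hmX : ∀ i, Measurable (X i)) (hmM : ∀ i, Measurable (M i))
    (hindep : iIndepFun (fun i ω => (X i ω, M i ω)) P)
    (hlaw : ∀ i, P.map (fun ω => (X i ω, M i ω)) = (unifDisk R).prod unifUnit) :
    P {ω | h ≤ dist (X 0 ω) XT ∧ ∀ j : Fin (n+2), j ≠ 0 →
        (dist (X 0 ω) (X j ω) < h → M 0 ω < M j ω)}
      = ∫⁻ z, Fint h R XT (n+1) z ∂((unifDisk R).prod unifUnit) := by
  haveI := unifDisk_prob hR
  set ν : Measure (E2 × ℝ) := (unifDisk R).prod unifUnit with hν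
  haveI : IsProbabilityMeasure ν := by rw [hν]; infer_instance
  set Event : Set (Fin (n+2) → E2 × ℝ) :=
    {y | h ≤ dist (y 0).1 XT ∧ ∀ j : Fin (n+2), j ≠ 0 →
      (dist (y 0).1 (y j).1 < h → (y 0).2 < (y j).2)} with hEvent
  have hEventMeas : MeasurableSet Event := by
    rw [hEvent, Set.setOf_and]
    refine MeasurableSet.inter
      (measurableSet_le measurable_const ((Measurable.fst (measurable_pi_apply 0)).dist
        measurable_const)) ?_
    have : {y : Fin (n+2) → E2 × ℝ | ∀ j : Fin (n+2), j ≠ 0 →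
        (dist (y 0).1 (y j).1 < h → (y 0).2 < (y j).2)}
        = ⋂ j : Fin (n+2), {y | j ≠ 0 → (dist (y 0).1 (y j).1 < h → (y 0).2 < (y j).2)} := by
      ext y; simp
    rw [this]
    refine MeasurableSet.iInter fun j => ?_
    by_cases hj : j = 0
    · simp [hj]
    · have : {y : Fin (n+2) → E2 × ℝ | j ≠ 0 →
          (dist (y 0).1 (y j).1 < h → (y 0).2 < (y j).2)}
          = {y : Fin (n+2) → E2 × ℝ | dist (y 0).1 (y j).1 < h}ᶜ
            ∪ {y : Fin (n+2) → E2 × ℝ | (y 0).2 < (y j).2} := by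
        ext y; simp only [Set.mem_setOf_eq, Set.mem_union, Set.mem_compl_iff, hj,
          ne_eq, not_false_eq_true, forall_true_left]; tauto
      rw [this]
      exact (((measurableSet_lt ((Measurable.fst (measurable_pi_apply 0)).dist
        (Measurable.fst (measurable_pi_apply j))) measurable_const)).compl).union
        (measurableSet_lt (Measurable.snd (measurable_pi_apply 0))
          (Measurable.snd (measurable_pi_apply j)))
  have hjm : Measurable (fun (ω : Ω) (i : Fin (n+2)) => (X i ω, M i ω)) :=
    measurable_pi_lambda _ (fun i => (hmX i).prodMk (hmM i))
  have h1 : P {ω | h ≤ dist (X 0 ω) XT ∧ ∀ j : Fin (n+2), j ≠ 0 →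
        (dist (X 0 ω) (X j ω) < h → M 0 ω < M j ω)}
      = Measure.pi (fun _ : Fin (n+2) => ν) Event := by
    rw [← joint_law P (fun i ω => (X i ω, M i ω)) (fun i => (hmX i).prodMk (hmM i))
      hindep ν hlaw, Measure.map_apply hjm hEventMeas]
    rfl
  set Event' : Set ((E2 × ℝ) × (Fin (n+1) → E2 × ℝ)) :=
    {z | h ≤ dist z.1.1 XT ∧ ∀ j : Fin (n+1),
      (dist z.1.1 (z.2 j).1 < h → z.1.2 < (z.2 j).2)} with hE'def
  have hE'meas : MeasurableSet Event' := by
    rw [hE'def, Set.setOf_and]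
    refine MeasurableSet.inter
      (measurableSet_le measurable_const (measurable_fst.fst.dist measurable_const)) ?_
    have : {z : (E2 × ℝ) × (Fin (n+1) → E2 × ℝ) | ∀ j : Fin (n+1),
        (dist z.1.1 (z.2 j).1 < h → z.1.2 < (z.2 j).2)}
        = ⋂ j : Fin (n+1), {z : (E2 × ℝ) × (Fin (n+1) → E2 × ℝ) |
            dist z.1.1 (z.2 j).1 < h}ᶜ
          ∪ {z : (E2 × ℝ) × (Fin (n+1) → E2 × ℝ) | z.1.2 < (z.2 j).2} := by
      ext z; simp only [Set.mem_setOf_eq, Set.mem_iInter, Set.mem_union, Set.mem_compl_iff]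
      constructor
      · intro hz j; rcases lt_or_ge (dist z.1.1 (z.2 j).1) h with h'|h'
        · right; exact hz j h'
        · left; exact not_lt.2 h'
      · intro hz j hd; rcases hz j with h'|h'
        · exact absurd hd h'
        · exact h'
    rw [this]
    refine MeasurableSet.iInter fun j => ?_
    exact ((measurableSet_lt (measurable_fst.fst.dist
      (((measurable_pi_apply j).comp measurable_snd).fst)) measurable_const).compl).union
      (measurableSet_lt measurable_fst.snd (((measurable_pi_apply j).comp measurable_snd).snd))
  have hmp := measurePreserving_piFinSuccAbove (fun _ : Fin (n+2) => ν) 0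
  have hpre : (MeasurableEquiv.piFinSuccAbove (fun _ : Fin (n+2) => E2 × ℝ) 0) ⁻¹' Event'
      = Event := by
    have key : ∀ y : Fin (n+2) → E2 × ℝ,
        (MeasurableEquiv.piFinSuccAbove (fun _ : Fin (n+2) => E2 × ℝ) 0) y
        = (y 0, fun j => y ((0 : Fin (n+2)).succAbove j)) := fun y => rfl
    ext y
    rw [Set.mem_preimage, key y]
    simp only [hEvent, hE'def, Set.mem_setOf_eq]
    constructor
    · rintro ⟨hy1, hy2⟩
      refine ⟨hy1, fun j hj => ?_⟩
      induction j using Fin.cases with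
      | zero => exact absurd rfl hj
      | succ i =>
        have := hy2 i
        rwa [Fin.zero_succAbove] at this
    · rintro ⟨hy1, hy2⟩
      refine ⟨hy1, fun j => ?_⟩
      exact hy2 ((0 : Fin (n+2)).succAbove j)
        (by rw [Fin.zero_succAbove]; exact Fin.succ_ne_zero j)
  have h2 : Measure.pi (fun _ : Fin (n+2) => ν) Event
      = (ν.prod (Measure.pi (fun _ : Fin (n+1) => ν))) Event' := by
    rw [← hpre]
    exact hmp.measure_preimage hE'meas.nullMeasurableSet
  have h3 : (ν.prod (Measure.pi (fun _ : Fin (n+1) => ν))) Event'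
      = ∫⁻ z, Fint h R XT (n+1) z ∂ν := by
    rw [Measure.prod_apply hE'meas]
    refine lintegral_congr fun z => ?_
    by_cases hz : h ≤ dist z.1 XT
    · have hzpre : Prod.mk z ⁻¹' Event' = Set.pi Set.univ (fun _ : Fin (n+1) => Sset h z) := by
        ext w
        simp only [Set.mem_preimage, hE'def, Set.mem_setOf_eq, Set.mem_pi, Set.mem_univ,
          forall_true_left, Sset, hz, true_and]
      rw [hzpre, Measure.pi_pi]
      rw [Fint, Set.indicator_of_mem (show z ∈ {p : E2 × ℝ | h ≤ dist p.1 XT} from hz)]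
      simp [Finset.prod_const, Finset.card_univ]
      rfl
    · have hzpre : Prod.mk z ⁻¹' Event' = ∅ := by
        ext w; simp only [Set.mem_preimage, hE'def, Set.mem_setOf_eq, Set.mem_empty_iff_false,
          iff_false]; intro hw; exact hz hw.1
      rw [hzpre]
      rw [Fint, Set.indicator_of_notMem (show z ∉ {p : E2 × ℝ | h ≤ dist p.1 XT} from hz)]
      simp
  rw [h1, h2, h3]

lemma nuS (h R : ℝ) (hR : 0 < R) (z : E2 × ℝ) :
    ((unifDisk R).prod unifUnit) (Sset h z)
      = 1 - unifDisk R (ball z.1 h) * unifUnit (Iic z.2) := by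
  haveI := unifDisk_prob hR
  rw [Sset_eq, prob_compl_eq_one_sub (measurableSet_ball.prod measurableSet_Iic),
    Measure.prod_prod]

lemma change_var (h R : ℝ) (hR : 0 < R) (XT : E2) (k : ℕ) :
    ∫⁻ z, Fint h R XT k z ∂((unifDisk R).prod unifUnit)
      = ∫⁻ w, Fint h R XT k (R • w.1, w.2) ∂((unifDisk 1).prod unifUnit) := by
  haveI := unifDisk_prob one_pos
  have hmap : (unifDisk R).prod unifUnit
      = Measure.map (fun w : E2 × ℝ => (R • w.1, w.2)) ((unifDisk 1).prod unifUnit) := by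
    have hmm := Measure.map_prod_map (unifDisk 1) unifUnit
      ((continuous_const_smul R).measurable) (measurable_id : Measurable (id : ℝ → ℝ))
    rw [unifDisk_map_smul hR, Measure.map_id] at hmm
    rw [hmm]
    rfl
  rw [hmap]
  exact lintegral_map (measurable_Fint h R hR XT k)
    (((measurable_const_smul R).comp measurable_fst).prodMk measurable_snd)

lemma real_limit (x : ℝ) :
    Tendsto (fun n : ℕ => (1 + x / ((n:ℝ)+2)) ^ (n+1)) atTop (𝓝 (Real.exp x)) := by
  have h1 : Tendsto (fun n : ℕ => (1 + x / ((n:ℝ)+2)) ^ (n+2)) atTop (𝓝 (Real.exp x)) := by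
    refine ((Real.tendsto_one_add_div_pow_exp x).comp (tendsto_add_atTop_nat 2)).congr fun n => ?_
    simp only [Function.comp_apply]
    push_cast
    rfl
  have h2 : Tendsto (fun n : ℕ => 1 + x / ((n:ℝ)+2)) atTop (𝓝 1) := by
    have h0 : Tendsto (fun n : ℕ => x / ((n:ℝ)+2)) atTop (𝓝 0) := by
      refine ((tendsto_const_div_atTop_nhds_zero_nat x).comp (tendsto_add_atTop_nat 2)).congr
        fun n => ?_
      simp only [Function.comp_apply]
      push_cast
      rfl
    simpa using tendsto_const_nhds.add h0
  have h3 := h1.div h2 one_ne_zero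
  rw [div_one] at h3
  refine Tendsto.congr' ?_ h3
  filter_upwards [h2.eventually (eventually_gt_nhds (by norm_num : (0:ℝ) < 1))] with n hn
  show (1 + x / (↑n + 2)) ^ (n + 2) / (1 + x / (↑n + 2)) = (1 + x / (↑n + 2)) ^ (n + 1)
  rw [pow_succ, mul_div_assoc, div_self hn.ne', mul_one]

lemma integral_exp_aux (c : ℝ) (hc : 0 < c) :
    ∫ y in (0:ℝ)..1, Real.exp (-(c*y)) = (1 - Real.exp (-c)) / c := by
  have hderiv : ∀ y ∈ Set.uIcc (0:ℝ) 1,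
      HasDerivAt (fun t : ℝ => Real.exp (-(c*t)) / (-c)) (Real.exp (-(c*y))) y := by
    intro y _
    have h1 : HasDerivAt (fun t : ℝ => -(c*t)) (-c) y := by
      simpa [neg_mul] using ((hasDerivAt_id y).const_mul (-c))
    have h2 := (Real.hasDerivAt_exp (-(c*y))).comp y h1
    have h3 := h2.div_const (-c)
    refine h3.congr_deriv ?_
    rw [mul_div_assoc, div_self (neg_ne_zero.2 hc.ne'), mul_one]
  rw [intervalIntegral.integral_eq_sub_of_hasDerivAt hderiv
    (Continuous.intervalIntegrable (by continuity) _ _)]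
  rw [mul_one, mul_zero, neg_zero, Real.exp_zero, div_sub_div_same, div_neg, ← neg_div, neg_sub]

lemma lint_exp (c : ℝ) (hc : 0 < c) :
    ∫⁻ w : E2 × ℝ, ENNReal.ofReal (Real.exp (-(c * w.2))) ∂((unifDisk 1).prod unifUnit)
      = ENNReal.ofReal ((1 - Real.exp (-c)) / c) := by
  haveI := unifDisk_prob one_pos
  rw [MeasureTheory.lintegral_prod _ (by fun_prop)]
  have hinner : ∀ x : E2, ∫⁻ y, ENNReal.ofReal (Real.exp (-(c * y))) ∂unifUnit
      = ENNReal.ofReal ((1 - Real.exp (-c)) / c) := by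
    intro x
    have hint : Integrable (fun y : ℝ => Real.exp (-(c*y))) unifUnit :=
      Continuous.integrableOn_Icc (by continuity)
    have h0 : 0 ≤ᵐ[unifUnit] fun y : ℝ => Real.exp (-(c*y)) :=
      Eventually.of_forall (fun y => (Real.exp_pos _).le)
    rw [← MeasureTheory.ofReal_integral_eq_lintegral_ofReal hint h0]
    congr 1
    have : ∫ y, Real.exp (-(c*y)) ∂unifUnit = ∫ y in Set.Icc (0:ℝ) 1, Real.exp (-(c*y)) := rfl
    rw [this, MeasureTheory.integral_Icc_eq_integral_Ioc,
      ← intervalIntegral.integral_of_le zero_le_one, integral_exp_aux c hc]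
  rw [lintegral_congr (fun x : E2 => hinner x), lintegral_const]
  simp

lemma ae_good : ∀ᵐ w : E2 × ℝ ∂((unifDisk 1).prod unifUnit),
    (‖w.1‖ < 1 ∧ w.1 ≠ 0) ∧ w.2 ∈ Set.Icc (0:ℝ) 1 := by
  haveI := unifDisk_prob one_pos
  have hA : ∀ᵐ w : E2 × ℝ ∂((unifDisk 1).prod unifUnit), ‖w.1‖ < 1 ∧ w.1 ≠ 0 := by
    rw [ae_iff]
    have hset : {w : E2 × ℝ | ¬(‖w.1‖ < 1 ∧ w.1 ≠ 0)}
        = {x : E2 | ¬(‖x‖ < 1 ∧ x ≠ 0)} ×ˢ (Set.univ : Set ℝ) := by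
      ext w; simp [Set.mem_prod]
    rw [hset, Measure.prod_prod, measure_univ, mul_one]
    have hsub : {x : E2 | ¬(‖x‖ < 1 ∧ x ≠ 0)} ⊆ {x : E2 | 1 ≤ ‖x‖} ∪ {0} := by
      intro x hx
      simp only [Set.mem_setOf_eq, not_and_or, not_lt, not_ne_iff] at hx
      rcases hx with hx | hx
      · exact Or.inl hx
      · exact Or.inr (by simp [hx])
    refine measure_mono_null hsub (measure_union_null ?_ ?_)
    · rw [unifDisk, Measure.smul_apply,
        Measure.restrict_apply (measurableSet_le measurable_const measurable_norm)]
      have : {x : E2 | 1 ≤ ‖x‖} ∩ closedBall 0 1 = sphere (0:E2) 1 := by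
        ext x
        simp only [Set.mem_inter_iff, Set.mem_setOf_eq, mem_closedBall, mem_sphere,
          dist_zero_right]
        constructor
        · rintro ⟨h1, h2⟩; exact le_antisymm h2 h1
        · intro hx; rw [hx]; exact ⟨le_refl 1, le_refl 1⟩
      rw [this, Measure.addHaar_sphere]
      simp
    · rw [unifDisk, Measure.smul_apply,
        Measure.restrict_apply (measurableSet_singleton 0)]
      rw [measure_mono_null Set.inter_subset_left (measure_singleton 0)]
      simp
  have hB : ∀ᵐ w : E2 × ℝ ∂((unifDisk 1).prod unifUnit), w.2 ∈ Set.Icc (0:ℝ) 1 := by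
    rw [ae_iff]
    have hset : {w : E2 × ℝ | ¬ w.2 ∈ Set.Icc (0:ℝ) 1}
        = (Set.univ : Set E2) ×ˢ (Set.Icc (0:ℝ) 1)ᶜ := by
      ext w; simp [Set.mem_prod]
    rw [hset, Measure.prod_prod, measure_univ, one_mul, unifUnit,
      Measure.restrict_apply measurableSet_Icc.compl]
    simp
  exact hA.and hB

lemma pointwise_limit (ρp h : ℝ) (hρp : 0 < ρp) (hh : 0 < h) (XT : E2)
    (R : ℕ → ℝ) (hR : ∀ n : ℕ, R n = Real.sqrt (n / (π * ρp)))
    (u : E2) (hu1 : ‖u‖ < 1) (hu0 : u ≠ 0) (t : ℝ) (ht : t ∈ Set.Icc (0:ℝ) 1) :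
    Tendsto (fun n : ℕ => Fint h (R (n+2)) XT (n+1) (R (n+2) • u, t)) atTop
      (𝓝 (ENNReal.ofReal (Real.exp (-(π * ρp * h^2 * t))))) := by
  have hπρ : 0 < π * ρp := mul_pos Real.pi_pos hρp
  set c : ℝ := π * ρp * h^2 with hc
  have hc0 : 0 < c := by positivity
  have hct0 : 0 ≤ c * t := mul_nonneg hc0.le ht.1
  have hRpos : ∀ n : ℕ, 0 < R (n+2) := fun n => by
    rw [hR]; exact Real.sqrt_pos.2 (by positivity)
  have hRsq : ∀ n : ℕ, (R (n+2))^2 = ((n:ℝ)+2) / (π * ρp) := fun n => by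
    rw [hR, Real.sq_sqrt (by positivity)]; push_cast; ring
  have hRtop : Tendsto (fun n : ℕ => R (n+2)) atTop atTop := by
    rw [Filter.tendsto_atTop]
    intro b
    have h1 : Tendsto (fun n : ℕ => ((n:ℝ)+2) / (π*ρp)) atTop atTop :=
      (tendsto_atTop_add_const_right atTop 2 tendsto_natCast_atTop_atTop).atTop_div_const hπρ
    filter_upwards [h1.eventually_ge_atTop (max b 0 ^ 2)] with n hn
    refine le_trans (le_max_left b 0) ?_
    rw [hR]
    exact Real.le_sqrt_of_sq_le (le_trans hn (le_of_eq (by push_cast; ring)))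
  -- eventually the indicator is 1
  have hev1 : ∀ᶠ n in atTop, h ≤ dist (R (n+2) • u) XT := by
    have hn : Tendsto (fun n : ℕ => R (n+2) * ‖u‖) atTop atTop :=
      hRtop.atTop_mul_const (norm_pos_iff.2 hu0)
    filter_upwards [hn.eventually_ge_atTop (h + ‖XT‖)] with n hn
    have hns : ‖R (n+2) • u‖ = R (n+2) * ‖u‖ := by
      rw [norm_smul, Real.norm_eq_abs, abs_of_pos (hRpos n)]
    calc h ≤ ‖R (n+2) • u‖ - ‖XT‖ := by rw [hns]; linarith
      _ ≤ ‖R (n+2) • u - XT‖ := norm_sub_norm_le _ _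
      _ = dist (R (n+2) • u) XT := (dist_eq_norm _ _).symm
  -- eventually, the ball around the point is inside the disk
  have hev2 : ∀ᶠ n in atTop, ball (R (n+2) • u) h ⊆ closedBall (0:E2) (R (n+2)) := by
    have hpos : 0 < 1 - ‖u‖ := by linarith
    have hn : Tendsto (fun n : ℕ => R (n+2) * (1 - ‖u‖)) atTop atTop :=
      hRtop.atTop_mul_const hpos
    filter_upwards [hn.eventually_ge_atTop h] with n hn
    refine ball_subset_closedBall.trans (closedBall_subset_closedBall' ?_)
    have hns : dist (R (n+2) • u) 0 = R (n+2) * ‖u‖ := by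
      rw [dist_zero_right, norm_smul, Real.norm_eq_abs, abs_of_pos (hRpos n)]
    rw [hns]; nlinarith
  have hev3 : ∀ᶠ n : ℕ in atTop, c * t / ((n:ℝ)+2) ≤ 1 := by
    have h0 : Tendsto (fun n : ℕ => c * t / ((n:ℝ)+2)) atTop (𝓝 0) := by
      refine ((tendsto_const_div_atTop_nhds_zero_nat (c*t)).comp
        (tendsto_add_atTop_nat 2)).congr fun n => ?_
      simp only [Function.comp_apply]; push_cast; rfl
    exact h0.eventually (eventually_le_nhds (by norm_num : (0:ℝ) < 1))
  have heq : ∀ᶠ n in atTop, Fint h (R (n+2)) XT (n+1) (R (n+2) • u, t)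
      = ENNReal.ofReal ((1 + (-(c*t)) / ((n:ℝ)+2)) ^ (n+1)) := by
    filter_upwards [hev1, hev2, hev3] with n h1 h2 h3
    rw [Fint, Set.indicator_of_mem
      (show ((R (n+2) • u, t) : E2 × ℝ) ∈ {p : E2 × ℝ | h ≤ dist p.1 XT} from h1)]
    rw [nuS h _ (hRpos n), unifDisk_ball (hRpos n) h2 hh.le, unifUnit_Iic ht]
    have hval : h^2 / (R (n+2))^2 = c / ((n:ℝ)+2) := by
      rw [hRsq n, hc]
      rw [div_div_eq_mul_div, div_eq_div_iff (by positivity) (by positivity)]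
      ring
    rw [hval, ← ENNReal.ofReal_mul (div_nonneg hc0.le (by positivity)), ← ENNReal.ofReal_one,
      ← ENNReal.ofReal_sub _ (mul_nonneg (div_nonneg hc0.le (by positivity)) ht.1),
      ← ENNReal.ofReal_pow (by rw [div_mul_eq_mul_div]; linarith [h3])]
    congr 2
    rw [div_mul_eq_mul_div]
    ring
  have hfin := (ENNReal.tendsto_ofReal (real_limit (-(c*t))))
  have : Real.exp (-(c*t)) = Real.exp (-(π * ρp * h^2 * t)) := by rw [hc]
  rw [this] at hfin
  exact Tendsto.congr' (Filter.EventuallyEq.symm heq) hfin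

/-- HC-II marginal.  Fix `ρ_p > 0`, `h > 0`, `X_T ∈ ℝ²`.  For each
`n ≥ 2` let `R_n = √(n/(π ρ_p))`, let `X_1, …, X_n` be i.i.d. uniform on the closed disk
of radius `R_n`, and let `M_1, …, M_n` be i.i.d. uniform marks on `[0,1]` independent of
the positions (i.e. the pairs `(X_i, M_i)` are i.i.d. with product law).  With `P_1 = 1`
iff `|X_1 − X_T| ≥ h` and `M_1 < M_j` for every `j ≠ 1` with `|X_1 − X_j| < h`, we have
`Pr(P_1 = 1) → (1 − exp(−π ρ_p h²))/(π ρ_p h²)`. -/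
theorem stmt10 (ρp h : ℝ) (hρp : 0 < ρp) (hh : 0 < h)
    (XT : EuclideanSpace ℝ (Fin 2))
    (R : ℕ → ℝ) (hR : ∀ n : ℕ, R n = Real.sqrt (n / (π * ρp)))
    (Ω : ℕ → Type) [∀ n, MeasurableSpace (Ω n)]
    (P : (n : ℕ) → Measure (Ω n)) (hprob : ∀ n, IsProbabilityMeasure (P n))
    (X : (n : ℕ) → Fin n → Ω n → EuclideanSpace ℝ (Fin 2))
    (M : (n : ℕ) → Fin n → Ω n → ℝ)
    (hmeasX : ∀ n i, Measurable (X n i)) (hmeasM : ∀ n i, Measurable (M n i))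
    (hindep : ∀ n, iIndepFun
      (fun i : Fin n => fun ω => (X n i ω, M n i ω)) (P n))
    (hlaw : ∀ n (i : Fin n), (P n).map (fun ω => (X n i ω, M n i ω)) =
      (unifDisk (R n)).prod unifUnit) :
    Tendsto
      (fun n : ℕ =>
        ((P (n + 2)) {ω | h ≤ dist (X (n + 2) 0 ω) XT ∧
          ∀ j : Fin (n + 2), j ≠ 0 →
            dist (X (n + 2) 0 ω) (X (n + 2) j ω) < h → M (n + 2) 0 ω < M (n + 2) j ω}).toReal)
      atTop (nhds ((1 - Real.exp (-(π * ρp * h ^ 2))) / (π * ρp * h ^ 2))) := by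
  have hπρ : 0 < π * ρp := mul_pos Real.pi_pos hρp
  set c : ℝ := π * ρp * h ^ 2 with hc
  have hc0 : 0 < c := by positivity
  have hRpos : ∀ n : ℕ, 0 < R (n+2) := fun n => by
    rw [hR]; exact Real.sqrt_pos.2 (by positivity)
  haveI := unifDisk_prob one_pos
  -- key identity for each n
  have key : ∀ n : ℕ,
      (P (n + 2)) {ω | h ≤ dist (X (n + 2) 0 ω) XT ∧
          ∀ j : Fin (n + 2), j ≠ 0 →
            dist (X (n + 2) 0 ω) (X (n + 2) j ω) < h → M (n + 2) 0 ω < M (n + 2) j ω}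
        = ∫⁻ w, Fint h (R (n+2)) XT (n+1) (R (n+2) • w.1, w.2)
            ∂((unifDisk 1).prod unifUnit) := by
    intro n
    haveI := hprob (n+2)
    rw [chain h (R (n+2)) (hRpos n) XT n (P (n+2)) (X (n+2)) (M (n+2)) (hmeasX (n+2))
      (hmeasM (n+2)) (hindep (n+2)) (fun i => hlaw (n+2) i),
      change_var h (R (n+2)) (hRpos n) XT (n+1)]
  -- limit of the lintegrals
  have hlim : Tendsto (fun n : ℕ => ∫⁻ w, Fint h (R (n+2)) XT (n+1) (R (n+2) • w.1, w.2)
      ∂((unifDisk 1).prod unifUnit)) atTop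
      (𝓝 (ENNReal.ofReal ((1 - Real.exp (-c)) / c))) := by
    rw [← lint_exp c hc0]
    have hexp : ∀ w : E2 × ℝ, ENNReal.ofReal (Real.exp (-(c * w.2)))
        = ENNReal.ofReal (Real.exp (-(π * ρp * h^2 * w.2))) := fun w => by rw [hc]
    refine tendsto_lintegral_of_dominated_convergence (fun _ => 1)
      (fun n => (measurable_Fint h (R (n+2)) (hRpos n) XT (n+1)).comp
        (((measurable_const_smul (R (n+2))).comp measurable_fst).prodMk measurable_snd))
      (fun n => Eventually.of_forall
        (fun w => Fint_le_one h (R (n+2)) (hRpos n) XT (n+1) _)) (by simp) ?_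
    filter_upwards [ae_good] with w hw
    obtain ⟨⟨hw1, hw2⟩, hw3⟩ := hw
    rw [hexp w]
    exact pointwise_limit ρp h hρp hh XT R hR w.1 hw1 hw2 w.2 hw3
  -- conclude by continuity of toReal
  have hne : ENNReal.ofReal ((1 - Real.exp (-c)) / c) ≠ ⊤ := ENNReal.ofReal_ne_top
  have hfinal := (ENNReal.tendsto_toReal hne).comp hlim
  have hval : (ENNReal.ofReal ((1 - Real.exp (-c)) / c)).toReal = (1 - Real.exp (-c)) / c := by
    rw [ENNReal.toReal_ofReal]
    have : Real.exp (-c) ≤ 1 := Real.exp_le_one_iff.2 (by linarith)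
    exact div_nonneg (by linarith) hc0.le
  rw [hval] at hfinal
  refine Tendsto.congr (fun n => ?_) hfinal
  simp only [Function.comp_apply, key n]
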